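/- The derivative of the standing wave solves the linearized Allen–Cahn equation and decays exponentially: Assume W satisfies the double-well assumptions and let q be the standing wave. Then q' is twice continuously differentiable, q'(s) > 0 for all s, (q')''(s) = W''(q(s)) q'(s) for all s ∈ ℝ, and there is a constant C > 0 such that 0 < q'(s) ≤ C exp(−|s|/C) for all s ∈ ℝ. -/

import Mathlib

open Set Filter Topology

noncomputable section

lemma deriv_nonneg_of_monotone {f : ℝ → ℝ} {d x : ℝ} (hm : Monotone f)
    (hd : HasDerivAt f d x) : 0 ≤ d := by
  have h := hasDerivAt_iff_tendsto_slope.mp hd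
  have h2 : Tendsto (slope f x) (𝓝[>] x) (𝓝 d) :=
    h.mono_left (nhdsWithin_mono x fun y hy => ne_of_gt hy)
  refine ge_of_tendsto h2 ?_
  filter_upwards [self_mem_nhdsWithin] with y (hy : x < y)
  rw [slope_def_field]
  exact div_nonneg (sub_nonneg.2 (hm hy.le)) (sub_nonneg.2 hy.le)

-- Gronwall decay

lemma gronwall_decay {v : ℝ → ℝ} (hv : Differentiable ℝ v) {k S : ℝ} (hk : 0 < k)
    (h : ∀ s ∈ Ici S, deriv v s ≤ -k * v s) :
    ∀ s ∈ Ici S, v s ≤ v S * Real.exp (k * S) * Real.exp (-k * s) := by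
  set g : ℝ → ℝ := fun s => v s * Real.exp (k * s) with hg
  have hder : ∀ s, HasDerivAt g (deriv v s * Real.exp (k*s) + v s * (k * Real.exp (k*s))) s := by
    intro s
    have he : HasDerivAt (fun s : ℝ => Real.exp (k * s)) (Real.exp (k*s) * k) s :=
      by
        have := (Real.hasDerivAt_exp (k*s)).comp s ((hasDerivAt_id s).const_mul k)
        exact this.congr_deriv (by ring)
    exact ((hv s).hasDerivAt.mul he).congr_deriv (by ring)
  have hmono : AntitoneOn g (Ici S) := by
    apply antitoneOn_of_deriv_nonpos (convex_Ici S)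
      (fun s _ => ((hder s).continuousAt).continuousWithinAt)
      (fun s hs => ((hder s).differentiableAt).differentiableWithinAt)
    intro s hs
    rw [interior_Ici] at hs
    rw [(hder s).deriv]
    have := h s (mem_Ici.mpr (le_of_lt hs))
    nlinarith [Real.exp_pos (k*s), this]
  intro s hs
  have := hmono (self_mem_Ici) hs hs
  have hgs : v s * Real.exp (k*s) ≤ v S * Real.exp (k*S) := this
  have hpos := Real.exp_pos (k*s)
  calc v s = v s * Real.exp (k*s) * Real.exp (-(k*s)) := by
        rw [mul_assoc, ← Real.exp_add]; simp
    _ ≤ v S * Real.exp (k*S) * Real.exp (-(k*s)) := by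
        apply mul_le_mul_of_nonneg_right hgs (Real.exp_pos _).le
    _ = v S * Real.exp (k * S) * Real.exp (-k * s) := by ring_nf

lemma quad_bound_one {W : ℝ → ℝ} (hd1 : Differentiable ℝ W) (hd2 : Differentiable ℝ (deriv W))
    (hW1 : W 1 = 0) (hW'1 : deriv W 1 = 0) {δ m M : ℝ} (hδ : 0 < δ)
    (hlow : ∀ u ∈ Icc (1-δ) 1, m ≤ deriv (deriv W) u)
    (hup : ∀ u ∈ Icc (1-δ) 1, deriv (deriv W) u ≤ M) :
    ∀ u ∈ Icc (1-δ) 1, deriv W u ≤ -(m*(1-u)) ∧ W u ≤ M*(1-u)^2/2 := by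
  have h1mem : (1:ℝ) ∈ Icc (1-δ) 1 := ⟨by linarith, le_refl 1⟩
  have hint : interior (Icc (1-δ) (1:ℝ)) = Ioo (1-δ) 1 := interior_Icc
  -- step 1 : deriv W u ≤ -(m*(1-u))
  have step1 : ∀ u ∈ Icc (1-δ) 1, deriv W u ≤ -(m*(1-u)) := by
    have hφ : ∀ t : ℝ, HasDerivAt (fun t => deriv W t - m*t) (deriv (deriv W) t - m) t := by
      intro t
      exact ((hd2 t).hasDerivAt.sub ((hasDerivAt_id t).const_mul m)).congr_deriv (by ring)
    have hmono : MonotoneOn (fun t => deriv W t - m*t) (Icc (1-δ) 1) := by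
      apply monotoneOn_of_deriv_nonneg (convex_Icc _ _)
        (fun t _ => (hφ t).continuousAt.continuousWithinAt)
        (fun t _ => (hφ t).differentiableAt.differentiableWithinAt)
      intro t ht
      rw [hint] at ht
      rw [(hφ t).deriv]
      have := hlow t ⟨ht.1.le, ht.2.le⟩
      linarith
    intro u hu
    have := hmono hu h1mem hu.2
    simp only [hW'1] at this
    linarith
  -- step 2 : -(M*(1-u)) ≤ deriv W u
  have step2 : ∀ u ∈ Icc (1-δ) 1, -(M*(1-u)) ≤ deriv W u := by
    have hφ : ∀ t : ℝ, HasDerivAt (fun t => deriv W t - M*t) (deriv (deriv W) t - M) t := by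
      intro t
      exact ((hd2 t).hasDerivAt.sub ((hasDerivAt_id t).const_mul M)).congr_deriv (by ring)
    have hmono : AntitoneOn (fun t => deriv W t - M*t) (Icc (1-δ) 1) := by
      apply antitoneOn_of_deriv_nonpos (convex_Icc _ _)
        (fun t _ => (hφ t).continuousAt.continuousWithinAt)
        (fun t _ => (hφ t).differentiableAt.differentiableWithinAt)
      intro t ht
      rw [hint] at ht
      rw [(hφ t).deriv]
      have := hup t ⟨ht.1.le, ht.2.le⟩
      linarith
    intro u hu
    have := hmono hu h1mem hu.2
    simp only [hW'1] at this
    linarith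
  -- step 3 : W u ≤ M*(1-u)^2/2
  intro u hu
  refine ⟨step1 u hu, ?_⟩
  have hh : ∀ t : ℝ, HasDerivAt (fun t => M*(1-t)^2/2 - W t) (M*(t-1) - deriv W t) t := by
    intro t
    have h0 : HasDerivAt (fun t : ℝ => (1-t)^2) (2*(1-t)^(2-1)*(-1)) t :=
      ((hasDerivAt_id t).const_sub (1:ℝ)).pow 2
    have h1 := (h0.const_mul (M/2)).sub (hd1 t).hasDerivAt
    convert h1 using 1
    · rfl
    · rfl
    · ext t; simp only [Pi.sub_apply]; ring
    · norm_num; ring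
  have hmono : AntitoneOn (fun t => M*(1-t)^2/2 - W t) (Icc (1-δ) 1) := by
    apply antitoneOn_of_deriv_nonpos (convex_Icc _ _)
      (fun t _ => (hh t).continuousAt.continuousWithinAt)
      (fun t _ => (hh t).differentiableAt.differentiableWithinAt)
    intro t ht
    rw [hint] at ht
    rw [(hh t).deriv]
    have := step2 t ⟨ht.1.le, ht.2.le⟩
    linarith
  have := hmono hu h1mem hu.2
  simp only [hW1] at this
  linarith

lemma quad_bound_neg_one {W : ℝ → ℝ} (hd1 : Differentiable ℝ W) (hd2 : Differentiable ℝ (deriv W))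
    (hW1 : W (-1) = 0) (hW'1 : deriv W (-1) = 0) {δ m M : ℝ} (hδ : 0 < δ)
    (hlow : ∀ u ∈ Icc (-1) (-1+δ), m ≤ deriv (deriv W) u)
    (hup : ∀ u ∈ Icc (-1) (-1+δ), deriv (deriv W) u ≤ M) :
    ∀ u ∈ Icc (-1:ℝ) (-1+δ), m*(u+1) ≤ deriv W u ∧ W u ≤ M*(u+1)^2/2 := by
  have h1mem : (-1:ℝ) ∈ Icc (-1:ℝ) (-1+δ) := ⟨le_refl _, by linarith⟩
  have hint : interior (Icc (-1:ℝ) (-1+δ)) = Ioo (-1) (-1+δ) := interior_Icc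
  have step1 : ∀ u ∈ Icc (-1:ℝ) (-1+δ), m*(u+1) ≤ deriv W u := by
    have hφ : ∀ t : ℝ, HasDerivAt (fun t => deriv W t - m*t) (deriv (deriv W) t - m) t :=
      fun t => by exact ((hd2 t).hasDerivAt.sub ((hasDerivAt_id t).const_mul m)).congr_deriv (by ring)
    have hmono : MonotoneOn (fun t => deriv W t - m*t) (Icc (-1:ℝ) (-1+δ)) := by
      apply monotoneOn_of_deriv_nonneg (convex_Icc _ _)
        (fun t _ => (hφ t).continuousAt.continuousWithinAt)
        (fun t _ => (hφ t).differentiableAt.differentiableWithinAt)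
      intro t ht
      rw [hint] at ht
      rw [(hφ t).deriv]
      have := hlow t ⟨ht.1.le, ht.2.le⟩
      linarith
    intro u hu
    have := hmono h1mem hu hu.1
    simp only [hW'1] at this
    linarith
  have step2 : ∀ u ∈ Icc (-1:ℝ) (-1+δ), deriv W u ≤ M*(u+1) := by
    have hφ : ∀ t : ℝ, HasDerivAt (fun t => deriv W t - M*t) (deriv (deriv W) t - M) t :=
      fun t => by exact ((hd2 t).hasDerivAt.sub ((hasDerivAt_id t).const_mul M)).congr_deriv (by ring)
    have hmono : AntitoneOn (fun t => deriv W t - M*t) (Icc (-1:ℝ) (-1+δ)) := by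
      apply antitoneOn_of_deriv_nonpos (convex_Icc _ _)
        (fun t _ => (hφ t).continuousAt.continuousWithinAt)
        (fun t _ => (hφ t).differentiableAt.differentiableWithinAt)
      intro t ht
      rw [hint] at ht
      rw [(hφ t).deriv]
      have := hup t ⟨ht.1.le, ht.2.le⟩
      linarith
    intro u hu
    have := hmono h1mem hu hu.1
    simp only [hW'1] at this
    linarith
  intro u hu
  refine ⟨step1 u hu, ?_⟩
  have hh : ∀ t : ℝ, HasDerivAt (fun t => M*(t+1)^2/2 - W t) (M*(t+1) - deriv W t) t := by
    intro t
    have h0 : HasDerivAt (fun t : ℝ => (t+1)^2) (2*(t+1)^(2-1)*1) t :=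
      ((hasDerivAt_id t).add_const (1:ℝ)).pow 2
    have h1 := (h0.const_mul (M/2)).sub (hd1 t).hasDerivAt
    convert h1 using 1
    · rfl
    · rfl
    · ext t; simp only [Pi.sub_apply]; ring
    · norm_num; ring
  have hmono : MonotoneOn (fun t => M*(t+1)^2/2 - W t) (Icc (-1:ℝ) (-1+δ)) := by
    apply monotoneOn_of_deriv_nonneg (convex_Icc _ _)
      (fun t _ => (hh t).continuousAt.continuousWithinAt)
      (fun t _ => (hh t).differentiableAt.differentiableWithinAt)
    intro t ht
    rw [hint] at ht
    rw [(hh t).deriv]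
    have := step2 t ⟨ht.1.le, ht.2.le⟩
    linarith
  have := hmono h1mem hu hu.1
  simp only [hW1] at this
  linarith

def DoubleWell (W : ℝ → ℝ) : Prop :=
  ContDiff ℝ 3 W ∧
  (∀ u ∈ Set.Icc (-1:ℝ) 1, 0 ≤ W u) ∧
  W (-1) = 0 ∧ W 1 = 0 ∧
  (∀ u ∈ Set.Ioo (-1:ℝ) 1, 0 < W u) ∧
  deriv W (-1) = 0 ∧ deriv W 0 = 0 ∧ deriv W 1 = 0 ∧
  (∀ u ∈ Set.Ioo (-1:ℝ) 0, 0 < deriv W u) ∧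
  (∀ u ∈ Set.Ioo (0:ℝ) 1, deriv W u < 0) ∧
  0 < deriv (deriv W) (-1) ∧ 0 < deriv (deriv W) 1 ∧ deriv (deriv W) 0 < 0

def StandingWave (W q : ℝ → ℝ) : Prop :=
  ContDiff ℝ 2 q ∧ StrictMono q ∧ (∀ s, q s ∈ Set.Ioo (-1:ℝ) 1) ∧ q 0 = 0 ∧
  (∀ s, deriv (deriv q) s = deriv W (q s)) ∧
  Filter.Tendsto q Filter.atTop (nhds 1) ∧ Filter.Tendsto q Filter.atBot (nhds (-1))

set_option maxHeartbeats 2000000 in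
/-- The derivative of the standing wave is C², positive, solves the linearized
Allen–Cahn equation, and decays exponentially. -/
theorem standing_wave_deriv_linearized (W q : ℝ → ℝ) (hW : DoubleWell W)
    (hq : StandingWave W q) :
    ContDiff ℝ 2 (deriv q) ∧
    (∀ s, 0 < deriv q s) ∧
    (∀ s, deriv (deriv (deriv q)) s = deriv (deriv W) (q s) * deriv q s) ∧
    ∃ C > 0, ∀ s : ℝ, deriv q s ≤ C * Real.exp (-|s| / C) := by
  obtain ⟨hW3, hWnn, hWm1, hWp1, hWpos, hW'm1, hW'0, hW'p1, _, _, hW''m1, hW''p1, _⟩ := hW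
  obtain ⟨hq2, hqmono, hqrange, hq0, hode, htop, hbot⟩ := hq
  -- regularity facts
  have hWd1 : Differentiable ℝ W := hW3.differentiable (by norm_num)
  have hW3' : ContDiff ℝ (2+1) W := by norm_num; exact hW3
  have hW'c2 : ContDiff ℝ 2 (deriv W) := (contDiff_succ_iff_deriv.mp hW3').2.2
  have hWd2 : Differentiable ℝ (deriv W) := hW'c2.differentiable (by norm_num)
  have hW''c : Continuous (deriv (deriv W)) := hW'c2.continuous_deriv (by norm_num)
  have hqd : Differentiable ℝ q := hq2.differentiable (by norm_num)
  have hq2' : ContDiff ℝ (1+1) q := by norm_num; exact hq2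
  have hvc1 : ContDiff ℝ 1 (deriv q) := (contDiff_succ_iff_deriv.mp hq2').2.2
  have hvd : Differentiable ℝ (deriv q) := hvc1.differentiable (by norm_num)
  set v : ℝ → ℝ := deriv q with hv_def
  have hddq : deriv v = fun s => deriv W (q s) := funext hode
  -- part 1 : C^2
  have part1 : ContDiff ℝ 2 (deriv q) := by
    rw [show (2 : WithTop ℕ∞) = 1+1 by norm_num, contDiff_succ_iff_deriv]
    refine ⟨hvd, by simp, ?_⟩
    rw [hddq]
    exact (hW'c2.of_le (by norm_num)).comp (hq2.of_le (by norm_num))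
  -- part 3 : third derivative
  have part3 : ∀ s, deriv (deriv v) s = deriv (deriv W) (q s) * v s := by
    intro s
    rw [hddq]
    exact (((hWd2 (q s)).hasDerivAt.comp s (hqd s).hasDerivAt)).deriv
  -- energy identity
  have hvnn : ∀ s, 0 ≤ v s := fun s => deriv_nonneg_of_monotone hqmono.monotone (hqd s).hasDerivAt
  have hE0 : ∀ s : ℝ, HasDerivAt (fun s => (v s)^2 - 2 * W (q s)) 0 s := by
    intro s
    have h1 : HasDerivAt (fun s => (v s)^2) (2 * v s ^(2-1) * deriv v s) s :=
      (hvd s).hasDerivAt.pow 2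
    have h2 : HasDerivAt (fun s => W (q s)) (deriv W (q s) * v s) s :=
      (hWd1 (q s)).hasDerivAt.comp s (hqd s).hasDerivAt
    have h3 := h1.sub (h2.const_mul 2)
    exact h3.congr_deriv (by rw [hode s]; norm_num <;> ring)
  have hEconst : ∀ s : ℝ, (v s)^2 - 2 * W (q s) = (v 0)^2 - 2 * W (q 0) := by
    intro s
    exact is_const_of_deriv_eq_zero (fun t => (hE0 t).differentiableAt) (fun t => (hE0 t).deriv) s 0
  set c : ℝ := (v 0)^2 - 2 * W (q 0) with hc_def
  have hWq_top : Tendsto (fun s => W (q s)) atTop (nhds 0) := by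
    have := (hWd1.continuous.tendsto 1).comp htop
    rwa [hWp1] at this
  have hWq_bot : Tendsto (fun s => W (q s)) atBot (nhds 0) := by
    have := (hWd1.continuous.tendsto (-1)).comp hbot
    rwa [hWm1] at this
  have hc_nonneg : 0 ≤ c := by
    have hle : ∀ s : ℝ, -2 * W (q s) ≤ c := by
      intro s
      have := hEconst s
      nlinarith [sq_nonneg (v s)]
    have htend : Tendsto (fun s : ℝ => -2 * W (q s)) atTop (nhds 0) := by
      have := hWq_top.const_mul (-2)
      simpa using this
    exact le_of_tendsto' htend hle
  have hc_zero : c = 0 := by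
    rcases hc_nonneg.eq_or_lt' with h | hcpos
    · exact h.symm ▸ rfl
    -- derive a contradiction
    exfalso
    have hsqrt_pos : 0 < Real.sqrt c := Real.sqrt_pos.mpr hcpos
    have hvlb : ∀ s, Real.sqrt c ≤ v s := by
      intro s
      have h1 : c ≤ (v s)^2 := by
        have := hEconst s
        have hw := hWnn (q s) ⟨(hqrange s).1.le, (hqrange s).2.le⟩
        nlinarith
      calc Real.sqrt c ≤ Real.sqrt ((v s)^2) := Real.sqrt_le_sqrt h1
        _ = v s := by rw [Real.sqrt_sq (hvnn s)]
    have hgm : Monotone (fun s => q s - Real.sqrt c * s) := by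
      apply monotone_of_deriv_nonneg
      · exact hqd.sub ((differentiable_id).const_mul _)
      · intro x
        have hd : HasDerivAt (fun s => q s - Real.sqrt c * s) (v x - Real.sqrt c) x := by
          exact ((hqd x).hasDerivAt.sub ((hasDerivAt_id x).const_mul (Real.sqrt c))).congr_deriv (by rw [hv_def]; ring)
        rw [hd.deriv]
        linarith [hvlb x]
    have key := hgm (show (0:ℝ) ≤ 2 / Real.sqrt c by positivity)
    simp only [hq0, mul_zero, sub_zero] at key
    have : Real.sqrt c * (2 / Real.sqrt c) = 2 := by field_simp
    have hq_big : (2:ℝ) ≤ q (2 / Real.sqrt c) := by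
      linarith [key, this]
    linarith [(hqrange (2 / Real.sqrt c)).2]
  have hv2 : ∀ s, (v s)^2 = 2 * W (q s) := by
    intro s
    have := hEconst s
    rw [hc_zero] at this
    linarith
  -- part 2 : positivity
  have part2 : ∀ s, 0 < v s := by
    intro s
    rcases (hvnn s).eq_or_lt' with h | h
    · exfalso
      have h2 := hv2 s
      have h3 := hWpos (q s) (hqrange s)
      nlinarith [h, h2, h3]
    · exact h
  refine ⟨part1, part2, part3, ?_⟩
  -- neighborhood bounds on W'' near 1
  obtain ⟨δ₁, hδ₁, hδ₁b⟩ : ∃ δ > 0, ∀ u ∈ Icc (1-δ) 1,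
      deriv (deriv W) 1/2 ≤ deriv (deriv W) u ∧ deriv (deriv W) u ≤ 3*(deriv (deriv W) 1)/2 := by
    have hcont := hW''c.continuousAt (x := (1:ℝ))
    rw [Metric.continuousAt_iff] at hcont
    obtain ⟨δ, hδ, hball⟩ := hcont (deriv (deriv W) 1/2) (by linarith)
    refine ⟨δ/2, by linarith, ?_⟩
    intro u hu
    have hd : dist u 1 < δ := by
      rw [Real.dist_eq]
      have h1 := hu.1; have h2 := hu.2
      rw [abs_lt]; constructor <;> linarith
    have := hball hd
    rw [Real.dist_eq, abs_lt] at this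
    constructor <;> linarith [this.1, this.2]
  set μ := deriv (deriv W) 1 with hμdef
  have hq1 := quad_bound_one hWd1 hWd2 hWp1 hW'p1 hδ₁
    (fun u hu => (hδ₁b u hu).1) (fun u hu => (hδ₁b u hu).2)
  -- neighborhood bounds on W'' near -1
  obtain ⟨δ₂, hδ₂, hδ₂b⟩ : ∃ δ > 0, ∀ u ∈ Icc (-1) (-1+δ),
      deriv (deriv W) (-1)/2 ≤ deriv (deriv W) u ∧ deriv (deriv W) u ≤ 3*(deriv (deriv W) (-1))/2 := by
    have hcont := hW''c.continuousAt (x := (-1:ℝ))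
    rw [Metric.continuousAt_iff] at hcont
    obtain ⟨δ, hδ, hball⟩ := hcont (deriv (deriv W) (-1)/2) (by linarith)
    refine ⟨δ/2, by linarith, ?_⟩
    intro u hu
    have hd : dist u (-1) < δ := by
      rw [Real.dist_eq]
      have h1 := hu.1; have h2 := hu.2
      rw [abs_lt]; constructor <;> linarith
    have := hball hd
    rw [Real.dist_eq, abs_lt] at this
    constructor <;> linarith [this.1, this.2]
  set ν := deriv (deriv W) (-1) with hνdef
  have hq2bnd := quad_bound_neg_one hWd1 hWd2 hWm1 hW'm1 hδ₂
    (fun u hu => (hδ₂b u hu).1) (fun u hu => (hδ₂b u hu).2)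
  -- thresholds
  obtain ⟨S₁', hS₁'⟩ := eventually_atTop.mp (htop.eventually (eventually_gt_nhds
    (show (1:ℝ) - δ₁ < 1 by linarith)))
  set S₁ : ℝ := max S₁' 0 with hS₁def
  have hS₁0 : 0 ≤ S₁ := le_max_right _ _
  have hS₁ : ∀ s, S₁ ≤ s → 1 - δ₁ < q s := fun s hs => hS₁' s (le_trans (le_max_left _ _) hs)
  obtain ⟨S₂', hS₂'⟩ := eventually_atBot.mp (hbot.eventually (eventually_lt_nhds
    (show (-1:ℝ) < -1 + δ₂ by linarith)))
  set S₂ : ℝ := max (-S₂') 0 with hS₂def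
  have hS₂0 : 0 ≤ S₂ := le_max_right _ _
  have hS₂ : ∀ s, s ≤ -S₂ → q s < -1 + δ₂ := by
    intro s hs
    apply hS₂' s
    have : -S₂' ≤ S₂ := le_max_left _ _
    linarith
  -- decay rates
  set k₁ : ℝ := (μ/2) / Real.sqrt (3*μ/2) with hk₁def
  have hsp₁ : 0 < Real.sqrt (3*μ/2) := Real.sqrt_pos.mpr (by linarith)
  have hk₁ : 0 < k₁ := div_pos (by linarith) hsp₁
  set k₂ : ℝ := (ν/2) / Real.sqrt (3*ν/2) with hk₂def
  have hsp₂ : 0 < Real.sqrt (3*ν/2) := Real.sqrt_pos.mpr (by linarith)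
  have hk₂ : 0 < k₂ := div_pos (by linarith) hsp₂
  -- differential inequality near +infty
  have hdecay1 : ∀ s ∈ Ici S₁, deriv v s ≤ -k₁ * v s := by
    intro s hs
    have hqm : q s ∈ Icc (1-δ₁) 1 := ⟨(hS₁ s hs).le, (hqrange s).2.le⟩
    obtain ⟨hWle, hWq⟩ := hq1 (q s) hqm
    have h1q : 0 ≤ 1 - q s := by linarith [(hqrange s).2]
    have hvle : v s ≤ Real.sqrt (3*μ/2) * (1 - q s) := by
      have hrhs : 0 ≤ Real.sqrt (3*μ/2) * (1 - q s) := mul_nonneg hsp₁.le h1q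
      have hsq : (v s)^2 ≤ (Real.sqrt (3*μ/2) * (1 - q s))^2 := by
        rw [mul_pow, Real.sq_sqrt (by linarith : (0:ℝ) ≤ 3*μ/2)]
        have hv2s := hv2 s
        nlinarith [hWq]
      nlinarith [hvnn s, hrhs, hsq]
    rw [hode s]
    have hstep : k₁ * v s ≤ (μ/2) * (1 - q s) := by
      calc k₁ * v s ≤ k₁ * (Real.sqrt (3*μ/2) * (1 - q s)) :=
            mul_le_mul_of_nonneg_left hvle hk₁.le
        _ = (μ/2) * (1 - q s) := by
            rw [hk₁def, div_mul_eq_mul_div, ← mul_assoc, mul_comm (μ/2) _, mul_assoc,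
              mul_div_assoc]
            rw [mul_div_assoc' , mul_comm, mul_div_assoc, div_self (ne_of_gt hsp₁), mul_one]
    linarith
  have hA1 := gronwall_decay hvd hk₁ hdecay1
  -- differential inequality near -infty (for reflected function)
  have hud : Differentiable ℝ (fun t : ℝ => v (-t)) := hvd.comp differentiable_neg
  have hdecay2 : ∀ t ∈ Ici S₂, deriv (fun t : ℝ => v (-t)) t ≤ -k₂ * (fun t : ℝ => v (-t)) t := by
    intro t ht
    have hs : -t ≤ -S₂ := neg_le_neg ht
    have hqm : q (-t) ∈ Icc (-1:ℝ) (-1+δ₂) := ⟨(hqrange (-t)).1.le, (hS₂ (-t) hs).le⟩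
    obtain ⟨hWge, hWq⟩ := hq2bnd (q (-t)) hqm
    have h1q : 0 ≤ q (-t) + 1 := by linarith [(hqrange (-t)).1]
    have hvle : v (-t) ≤ Real.sqrt (3*ν/2) * (q (-t) + 1) := by
      have hrhs : 0 ≤ Real.sqrt (3*ν/2) * (q (-t) + 1) := mul_nonneg hsp₂.le h1q
      have hsq : (v (-t))^2 ≤ (Real.sqrt (3*ν/2) * (q (-t) + 1))^2 := by
        rw [mul_pow, Real.sq_sqrt (by linarith : (0:ℝ) ≤ 3*ν/2)]
        have hv2s := hv2 (-t)
        nlinarith [hWq]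
      nlinarith [hvnn (-t), hrhs, hsq]
    have hderiv : deriv (fun t : ℝ => v (-t)) t = -deriv v (-t) := deriv_comp_neg v t
    rw [hderiv, hode (-t)]
    have hstep : k₂ * v (-t) ≤ (ν/2) * (q (-t) + 1) := by
      calc k₂ * v (-t) ≤ k₂ * (Real.sqrt (3*ν/2) * (q (-t) + 1)) :=
            mul_le_mul_of_nonneg_left hvle hk₂.le
        _ = (ν/2) * (q (-t) + 1) := by
            rw [hk₂def, div_mul_eq_mul_div, ← mul_assoc, mul_comm (ν/2) _, mul_assoc,
              mul_div_assoc]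
            rw [mul_div_assoc' , mul_comm, mul_div_assoc, div_self (ne_of_gt hsp₂), mul_one]
    simp only []
    linarith
  have hA2 := gronwall_decay hud hk₂ hdecay2
  -- maximum on the middle compact interval
  have hne : (-S₂) ≤ S₁ := by linarith
  obtain ⟨xB, hxBmem, hxBmax⟩ := isCompact_Icc.exists_isMaxOn (nonempty_Icc.mpr hne)
    (hvd.continuous.continuousOn (s := Icc (-S₂) S₁))
  set B : ℝ := v xB with hBdef
  have hBpos : 0 < B := part2 xB
  -- the constant
  set A₁ : ℝ := v S₁ * Real.exp (k₁ * S₁) with hA₁def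
  set A₂ : ℝ := v (-S₂) * Real.exp (k₂ * S₂) with hA₂def
  have hA₁pos : 0 < A₁ := mul_pos (part2 S₁) (Real.exp_pos _)
  have hA₂pos : 0 < A₂ := mul_pos (part2 (-S₂)) (Real.exp_pos _)
  set C : ℝ := max (max (max A₁ A₂) (max (1/k₁) (1/k₂))) (max (max S₁ S₂) (B * Real.exp 1)) with hCdef
  have hBC : B * Real.exp 1 ≤ C := le_trans (le_max_right _ _) (le_max_right _ _)
  have hC : 0 < C := lt_of_lt_of_le (mul_pos hBpos (Real.exp_pos 1)) hBC
  have hA₁C : A₁ ≤ C := le_trans (le_trans (le_max_left _ _) (le_max_left _ _)) (le_max_left _ _)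
  have hA₂C : A₂ ≤ C := le_trans (le_trans (le_max_right _ _) (le_max_left _ _)) (le_max_left _ _)
  have hk₁C : 1/k₁ ≤ C := le_trans (le_trans (le_max_left _ _) (le_max_right _ _)) (le_max_left _ _)
  have hk₂C : 1/k₂ ≤ C := le_trans (le_trans (le_max_right _ _) (le_max_right _ _)) (le_max_left _ _)
  have hTC : max S₁ S₂ ≤ C := le_trans (le_max_left _ _) (le_max_right _ _)
  refine ⟨C, hC, ?_⟩
  intro s
  rcases le_or_gt S₁ s with hcase | hcase
  · -- s ≥ S₁
    have h1 := hA1 s hcase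
    have hs0 : 0 ≤ s := le_trans hS₁0 hcase
    rw [abs_of_nonneg hs0]
    have hCk : 1 ≤ k₁ * C := by
      rw [div_le_iff₀ hk₁] at hk₁C
      linarith
    have hexp : Real.exp (-k₁ * s) ≤ Real.exp (-s / C) := by
      apply Real.exp_le_exp.mpr
      rw [neg_div, neg_mul, neg_le_neg_iff, div_le_iff₀ hC]
      nlinarith
    calc v s ≤ A₁ * Real.exp (-k₁ * s) := by rw [hA₁def]; exact h1
      _ ≤ C * Real.exp (-s / C) :=
          mul_le_mul hA₁C hexp (Real.exp_pos _).le hC.le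
  rcases le_or_gt s (-S₂) with hcase2 | hcase2
  · -- s ≤ -S₂
    have h1 := hA2 (-s) (by simpa using neg_le_neg hcase2)
    rw [neg_neg] at h1
    have hs0 : s ≤ 0 := by linarith
    rw [abs_of_nonpos hs0]
    have hCk : 1 ≤ k₂ * C := by
      rw [div_le_iff₀ hk₂] at hk₂C
      linarith
    have hexp : Real.exp (-k₂ * -s) ≤ Real.exp (-(-s) / C) := by
      apply Real.exp_le_exp.mpr
      rw [neg_div, neg_mul, neg_le_neg_iff, div_le_iff₀ hC]
      nlinarith
    calc v s ≤ A₂ * Real.exp (-k₂ * -s) := by rw [hA₂def]; exact h1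
      _ ≤ C * Real.exp (-(-s) / C) :=
          mul_le_mul hA₂C hexp (Real.exp_pos _).le hC.le
  · -- middle
    have hsmem : s ∈ Icc (-S₂) S₁ := ⟨hcase2.le, hcase.le⟩
    have hvB : v s ≤ B := hxBmax hsmem
    have habs : |s| ≤ max S₁ S₂ := by
      rw [abs_le]
      constructor
      · linarith [le_max_right S₁ S₂, hsmem.1]
      · linarith [le_max_left S₁ S₂, hsmem.2]
    have hexp : Real.exp (-1 : ℝ) ≤ Real.exp (-|s| / C) := by
      apply Real.exp_le_exp.mpr
      rw [neg_div, neg_le_neg_iff, div_le_one hC]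
      linarith [hTC]
    calc v s ≤ B := hvB
      _ = (B * Real.exp 1) * Real.exp (-1 : ℝ) := by
          rw [mul_assoc, ← Real.exp_add]; norm_num
      _ ≤ C * Real.exp (-|s| / C) :=
          mul_le_mul hBC hexp (Real.exp_pos _).le hC.le

end
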